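/- For any (n+1)-regular properly edge-colored graph Γ with colors Δ_n = {0,…,n} and any cyclic permutation ε = (ε_0,…,ε_n) of Δ_n, the quantity χ_ε(Γ) = ∑_{i∈ℤ_{n+1}} g_{ε_i ε_{i+1}} + (1-n)·|V(Γ)|/2 is an even integer when Γ is bipartite and each bicolored subgraph Γ_{{i,j}} is a disjoint union of even cycles; here g_{ij} denotes the number of connected components of the subgraph Γ_{{i,j}} spanned by edges colored i or j. -/
import Mathlib

open Equiv


/-- An `(n+1)`-regular properly edge-colored graph, encoded by its colored
adjacency involutions: for each color `i ∈ Δ_n = {0,…,n}` every vertex has a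
unique neighbor along an edge of color `i`. -/
structure IGraph (n : ℕ) where
  V : Type
  fin : Fintype V
  a : Fin (n + 1) → V → V
  invol : ∀ i, Function.Involutive (a i)
  nofix : ∀ i v, a i v ≠ v

/-- The number `g_{ij}` of connected components of the bicolored subgraph
`Γ_{{i,j}}` spanned by the edges colored `i` or `j`. -/
noncomputable def IGraph.bic {n : ℕ} (Γ : IGraph n) (i j : Fin (n + 1)) : ℕ :=
  Nat.card (Quot (fun u w : Γ.V => Γ.a i u = w ∨ Γ.a j u = w))


lemma eqvgen_fixed_aux {α : Type*} (f : α → α) (hinj : Function.Injective f)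
    (x : α) (hx : f x = x) :
    ∀ u w, Relation.EqvGen (fun a b => f a = b) u w → (u = x ↔ w = x) := by
  intro u w h
  induction h with
  | rel a b hab =>
      constructor
      · rintro rfl; rw [← hab, hx]
      · rintro rfl; exact hinj (hab.trans hx.symm)
  | refl a => rfl
  | symm a b _ ih => exact ih.symm
  | trans a b c _ _ ih1 ih2 => exact ih1.trans ih2

lemma card_quot_swap_mul {α : Type*} [Fintype α] [DecidableEq α] (σ : Equiv.Perm α)
    {x : α} (hx : σ x ≠ x) :
    Nat.card (Quot (fun u w : α => (Equiv.swap x (σ x) * σ) u = w))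
      = Nat.card (Quot (fun u w : α => σ u = w)) + 1 := by
  classical
  let σ' : Equiv.Perm α := Equiv.swap x (σ x) * σ
  let r' : α → α → Prop := fun u w => σ' u = w
  let r : α → α → Prop := fun u w => σ u = w
  show Nat.card (Quot r') = Nat.card (Quot r) + 1
  have happ : ∀ v : α, σ' v = Equiv.swap x (σ x) (σ v) := fun v => rfl
  have hσ'x : σ' x = x := by rw [happ, Equiv.swap_apply_right]
  have hsing : ∀ w, Relation.EqvGen r' x w → w = x := fun w h =>
    (eqvgen_fixed_aux σ' σ'.injective x hσ'x x w h).mp rfl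
  have hφ : ∀ p q, r' p q → Quot.mk r p = Quot.mk r q := by
    intro p q h
    have h1 : Equiv.swap x (σ x) (σ p) = q := h
    by_cases hp : p = x
    · have hq : q = x := by rw [← h1, hp, Equiv.swap_apply_right]
      rw [hp, hq]
    · by_cases h2 : σ p = x
      · have hq : q = σ x := by rw [← h1, h2, Equiv.swap_apply_left]
        rw [hq]
        exact (Quot.sound (show r p x from h2)).trans
          (Quot.sound (show r x (σ x) from rfl))
      · have h3 : σ p ≠ σ x := fun hc => hp (σ.injective hc)
        have hq : q = σ p := by rw [← h1, Equiv.swap_apply_of_ne_of_ne h2 h3]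
        rw [hq]
        exact Quot.sound (show r p (σ p) from rfl)
  let φ : Quot r' → Quot r := Quot.lift (Quot.mk r) hφ
  let θ : α → Quot r' := fun v => if v = x then Quot.mk r' (σ x) else Quot.mk r' v
  have hθapp : ∀ v, θ v = if v = x then Quot.mk r' (σ x) else Quot.mk r' v :=
    fun v => rfl
  have hθ : ∀ p q, r p q → θ p = θ q := by
    intro p q h
    have h' : σ p = q := h
    by_cases hp : p = x
    · have hq : q = σ x := by rw [← h', hp]
      rw [hθapp, hθapp, if_pos hp, if_neg (hq ▸ hx), hq]
    · by_cases hq : q = x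
      · have : r' p (σ x) := by
          show Equiv.swap x (σ x) (σ p) = σ x
          rw [h', hq, Equiv.swap_apply_left]
        rw [hθapp, hθapp, if_neg hp, if_pos hq]
        exact Quot.sound this
      · have h2 : σ p ≠ x := by rw [h']; exact hq
        have h3 : σ p ≠ σ x := fun hc => hp (σ.injective hc)
        have : r' p q := by
          show Equiv.swap x (σ x) (σ p) = q
          rw [Equiv.swap_apply_of_ne_of_ne h2 h3, h']
        rw [hθapp, hθapp, if_neg hp, if_neg hq]
        exact Quot.sound this
  let θbar : Quot r → Quot r' := Quot.lift θ hθ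
  have hxne : ∀ v : α, v ≠ x → Quot.mk r' v ≠ Quot.mk r' x := by
    intro v hv hc
    exact hv (hsing v (Relation.EqvGen.symm _ _ (Quot.eq.mp hc)))
  have hσxne : Quot.mk r' (σ x) ≠ Quot.mk r' x := hxne _ hx
  have hφmk : ∀ v : α, φ (Quot.mk r' v) = Quot.mk r v := fun v => rfl
  have hθmk : ∀ v : α, θbar (Quot.mk r v) = θ v := fun v => rfl
  have hcomp : ∀ v : α, θbar (φ (Quot.mk r' v)) = θ v :=
    fun v => (congrArg θbar (hφmk v)).trans (hθmk v)
  have e : Quot r' ≃ (Quot r ⊕ Unit) := by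
    refine ⟨fun q => if q = Quot.mk r' x then Sum.inr () else Sum.inl (φ q),
      Sum.elim θbar (fun _ => Quot.mk r' x), ?_, ?_⟩
    · intro q
      induction q using Quot.ind with | _ v =>
      show (Sum.elim θbar (fun _ => Quot.mk r' x)
        (if Quot.mk r' v = Quot.mk r' x then Sum.inr () else Sum.inl (φ (Quot.mk r' v))))
        = Quot.mk r' v
      by_cases hv : v = x
      · rw [hv, if_pos rfl, Sum.elim_inr]
      · rw [if_neg (hxne v hv), Sum.elim_inl]
        have h5 : θ v = Quot.mk r' v := by rw [hθapp, if_neg hv]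
        exact (hcomp v).trans h5
    · rintro (c | ⟨⟩)
      · induction c using Quot.ind with | _ v =>
        show (if (θ v) = Quot.mk r' x then Sum.inr () else Sum.inl (φ (θ v)))
          = Sum.inl (Quot.mk r v)
        by_cases hv : v = x
        · rw [hθapp, if_pos hv, if_neg hσxne]
          have h4 : φ (Quot.mk r' (σ x)) = Quot.mk r (σ x) := rfl
          rw [h4, (Quot.sound (show r x (σ x) from rfl)).symm, hv]
        · rw [hθapp, if_neg hv, if_neg (hxne v hv)]
      · show (if Quot.mk r' x = Quot.mk r' x then Sum.inr () else
          Sum.inl (φ (Quot.mk r' x))) = Sum.inr ()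
        rw [if_pos rfl]
  rw [Nat.card_congr e, Nat.card_sum]
  simp

lemma card_quot_one {α : Type*} [Fintype α] :
    Nat.card (Quot (fun u w : α => u = w)) = Fintype.card α := by
  have e : Quot (fun u w : α => u = w) ≃ α := by
    refine ⟨Quot.lift id (fun a b h => h), Quot.mk _, ?_, fun a => rfl⟩
    intro q; induction q using Quot.ind with | _ a => rfl
  rw [Nat.card_congr e, Nat.card_eq_fintype_card]

lemma neg_one_pow_card_quot {α : Type*} [Fintype α] [DecidableEq α] (σ : Equiv.Perm α) :
    ((-1 : ℤ) ^ Nat.card (Quot (fun u w : α => σ u = w)))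
      = (-1) ^ Fintype.card α * ((Equiv.Perm.sign σ : ℤˣ) : ℤ) := by
  classical
  suffices H : ∀ m : ℕ, ∀ σ : Equiv.Perm α, σ.support.card = m →
      ((-1 : ℤ) ^ Nat.card (Quot (fun u w : α => σ u = w)))
        = (-1) ^ Fintype.card α * ((Equiv.Perm.sign σ : ℤˣ) : ℤ) from H _ σ rfl
  intro m
  induction m using Nat.strong_induction_on with
  | _ m ih =>
    intro σ hm
    by_cases h1 : σ = 1
    · subst h1
      have : (fun u w : α => (1 : Equiv.Perm α) u = w) = (fun u w : α => u = w) := by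
        funext u w; simp
      rw [this, card_quot_one]
      simp
    · obtain ⟨x, hx⟩ : ∃ x, σ x ≠ x := by
        by_contra hc
        push_neg at hc
        exact h1 (Equiv.ext fun y => by simp [hc y])
      have hlt : (Equiv.swap x (σ x) * σ).support.card < m :=
        hm ▸ Equiv.Perm.card_support_swap_mul hx
      have hIH := ih _ hlt (Equiv.swap x (σ x) * σ) rfl
      rw [card_quot_swap_mul σ hx] at hIH
      have hsign : Equiv.Perm.sign (Equiv.swap x (σ x) * σ) = - Equiv.Perm.sign σ := by
        rw [map_mul, Equiv.Perm.sign_swap (Ne.symm hx)]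
        simp
      rw [hsign, pow_succ] at hIH
      push_cast at hIH ⊢
      nlinarith [hIH]

lemma IGraph.bic_eq_card_quot {n : ℕ} (Γ : IGraph n) (s : Γ.V → Bool)
    (hs : ∀ i v, s (Γ.a i v) ≠ s v) (i j : Fin (n + 1))
    (σ : Equiv.Perm {v : Γ.V // s v = true})
    (hσ : ∀ v : {v : Γ.V // s v = true}, (σ v : Γ.V) = Γ.a i (Γ.a j (v : Γ.V))) :
    Γ.bic i j
      = Nat.card (Quot (fun u w : {v : Γ.V // s v = true} => σ u = w)) := by
  classical
  have hflip : ∀ (c : Fin (n + 1)) (v : Γ.V), s v = true → s (Γ.a c v) = false := by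
    intro c v hv
    have := hs c v
    cases hb : s (Γ.a c v) <;> simp_all
  have hflip' : ∀ (c : Fin (n + 1)) (v : Γ.V), s v = false → s (Γ.a c v) = true := by
    intro c v hv
    have := hs c v
    cases hb : s (Γ.a c v) <;> simp_all
  let r0 : Γ.V → Γ.V → Prop := fun u w => Γ.a i u = w ∨ Γ.a j u = w
  let rB : {v : Γ.V // s v = true} → {v : Γ.V // s v = true} → Prop :=
    fun u w => σ u = w
  show Nat.card (Quot r0) = Nat.card (Quot rB)
  let F : Γ.V → {v : Γ.V // s v = true} := fun v =>
    if h : s v = true then ⟨v, h⟩ else ⟨Γ.a i v, hflip' i v (by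
      cases hb : s v; rfl; exact absurd hb h)⟩
  have hFval : ∀ v (h : s v = true), F v = ⟨v, h⟩ := by
    intro v h; simp only [F, dif_pos h]
  have hFval' : ∀ v, s v = false → (F v : Γ.V) = Γ.a i v := by
    intro v h
    simp only [F]
    rw [dif_neg (by simp [h])]
  have hwd : ∀ u w, r0 u w → Quot.mk rB (F u) = Quot.mk rB (F w) := by
    intro u w hr
    by_cases hu : s u = true
    · have hw : s w = false := by
        rcases hr with h | h
        · rw [← h]; exact hflip i u hu
        · rw [← h]; exact hflip j u hu
      rcases hr with h | h
      · -- w = a i u, F w = ⟨a i w, _⟩ = ⟨u, _⟩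
        have : (F w : Γ.V) = u := by rw [hFval' w hw, ← h, Γ.invol i u]
        have hFw : F w = F u := by
          apply Subtype.ext
          rw [this, hFval u hu]
        rw [hFw]
      · -- w = a j u : σ (F u) = F w
        apply Quot.sound
        show σ (F u) = F w
        apply Subtype.ext
        rw [hσ (F u), hFval u hu, hFval' w hw]
        show Γ.a i (Γ.a j u) = Γ.a i w
        rw [← h]
    · have hu' : s u = false := by cases hb : s u; rfl; exact absurd hb hu
      have hw : s w = true := by
        rcases hr with h | h
        · rw [← h]; exact hflip' i u hu'
        · rw [← h]; exact hflip' j u hu'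
      rcases hr with h | h
      · have hFw : F u = F w := by
          apply Subtype.ext
          rw [hFval' u hu', hFval w hw, h]
        rw [hFw]
      · refine (Quot.sound ?_).symm
        show σ (F w) = F u
        apply Subtype.ext
        rw [hσ (F w), hFval w hw, hFval' u hu']
        show Γ.a i (Γ.a j w) = Γ.a i u
        rw [← h, Γ.invol j u]
  have hwd2 : ∀ u w : {v : Γ.V // s v = true}, rB u w → Quot.mk r0 (u : Γ.V) = Quot.mk r0 (w : Γ.V) := by
    intro u w hr
    have h1 : Quot.mk r0 (u : Γ.V) = Quot.mk r0 (Γ.a j u) :=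
      Quot.sound (show r0 (u : Γ.V) (Γ.a j u) from Or.inr rfl)
    have h2 : Quot.mk r0 (Γ.a j (u : Γ.V)) = Quot.mk r0 (Γ.a i (Γ.a j u)) :=
      Quot.sound (show r0 (Γ.a j (u : Γ.V)) (Γ.a i (Γ.a j u)) from Or.inl rfl)
    have h3 : Γ.a i (Γ.a j (u : Γ.V)) = (w : Γ.V) := by
      rw [← hσ u]
      exact congrArg _ hr
    rw [h1, h2, h3]
  let to1 : Quot r0 → Quot rB := Quot.lift (fun v => Quot.mk rB (F v)) hwd
  let to2 : Quot rB → Quot r0 := Quot.lift (fun b => Quot.mk r0 (b : Γ.V)) hwd2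
  have hto1 : ∀ v, to1 (Quot.mk r0 v) = Quot.mk rB (F v) := fun _ => rfl
  have hto2 : ∀ b, to2 (Quot.mk rB b) = Quot.mk r0 (b : Γ.V) := fun _ => rfl
  have e : Quot r0 ≃ Quot rB := by
    refine ⟨to1, to2, ?_, ?_⟩
    · intro q
      induction q using Quot.ind with | _ v =>
      rw [(congrArg to2 (hto1 v)).trans (hto2 (F v))]
      by_cases hv : s v = true
      · rw [hFval v hv]
      · have hv' : s v = false := by cases hb : s v; rfl; exact absurd hb hv
        rw [hFval' v hv']
        exact (Quot.sound (show r0 v (Γ.a i v) from Or.inl rfl)).symm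
    · intro q
      induction q using Quot.ind with | _ b =>
      rw [(congrArg to1 (hto2 b)).trans (hto1 (b : Γ.V))]
      rw [hFval (b : Γ.V) b.2]
  exact Nat.card_congr e

/-- For any `(n+1)`-regular properly edge-colored graph `Γ` and any cyclic
permutation `ε` of `Δ_n`, the quantity
`χ_ε(Γ) = ∑_{i ∈ ℤ_{n+1}} g_{ε_i ε_{i+1}} + (1-n)·|V(Γ)|/2`
is an even integer when `Γ` is bipartite and each bicolored subgraph
`Γ_{{i,j}}` is a disjoint union of even cycles. -/
theorem chi_even (n : ℕ) (Γ : IGraph n) (ε : Equiv.Perm (Fin (n + 1)))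
    (hbip : ∃ sign : Γ.V → Bool, ∀ (i : Fin (n + 1)) (v : Γ.V),
      sign (Γ.a i v) ≠ sign v)
    (heven : ∀ i j : Fin (n + 1), i ≠ j → ∀ v : Γ.V,
      Even (Nat.card {w : Γ.V //
        Relation.ReflTransGen (fun x y => Γ.a i x = y ∨ Γ.a j x = y) v w})) :
    ∃ k : ℤ,
      (∑ i : Fin (n + 1), (Γ.bic (ε i) (ε (i + 1)) : ℚ))
        + (1 - (n : ℚ)) * (Nat.card Γ.V : ℚ) / 2 = 2 * (k : ℚ) := by
  classical
  haveI : Fintype Γ.V := Γ.fin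
  obtain ⟨s, hs⟩ := hbip
  have hflip : ∀ (c : Fin (n + 1)) (v : Γ.V), s v = true → s (Γ.a c v) = false := by
    intro c v hv; have := hs c v; cases hb : s (Γ.a c v) <;> simp_all
  have hflip' : ∀ (c : Fin (n + 1)) (v : Γ.V), s v = false → s (Γ.a c v) = true := by
    intro c v hv; have := hs c v; cases hb : s (Γ.a c v) <;> simp_all
  let B := {v : Γ.V // s v = true}
  let W := {v : Γ.V // s v = false}
  let τ : Fin (n + 1) → (B ≃ W) := fun c =>
    ⟨fun v => ⟨Γ.a c v, hflip c v v.2⟩, fun w => ⟨Γ.a c w, hflip' c w w.2⟩,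
      fun v => Subtype.ext (Γ.invol c v), fun w => Subtype.ext (Γ.invol c w)⟩
  let P : Fin (n + 1) → Equiv.Perm B := fun c => (τ c).trans (τ 0).symm
  let sgn : Fin (n + 1) → ℤ := fun c => ((Equiv.Perm.sign (P c) : ℤˣ) : ℤ)
  have hsgnsq : ∀ c, sgn c * sgn c = 1 := by
    intro c
    show ((Equiv.Perm.sign (P c) : ℤˣ) : ℤ) * ((Equiv.Perm.sign (P c) : ℤˣ) : ℤ) = 1
    rw [← Units.val_mul, Int.units_mul_self]
    rfl
  let b := Fintype.card B
  -- per-pair parity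
  have hpair : ∀ i j : Fin (n + 1),
      ((-1 : ℤ) ^ Γ.bic i j) = (-1) ^ b * (sgn i * sgn j) := by
    intro i j
    let σij : Equiv.Perm B := (τ j).trans (τ i).symm
    have hσapp : ∀ v : B, (σij v : Γ.V) = Γ.a i (Γ.a j (v : Γ.V)) := fun v => rfl
    have hfact : σij = (P i)⁻¹ * (P j) := by
      apply Equiv.ext
      intro v
      show (τ i).symm ((τ j) v) = ((P i)⁻¹) ((P j) v)
      show (τ i).symm ((τ j) v) = ((τ i).trans (τ 0).symm).symm ((τ 0).symm ((τ j) v))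
      rw [Equiv.symm_trans_apply]
      rw [Equiv.symm_symm, Equiv.apply_symm_apply]
    have hsign : ((Equiv.Perm.sign σij : ℤˣ) : ℤ) = sgn i * sgn j := by
      have hinv : ∀ u : ℤˣ, u⁻¹ = u := fun u => by
        rw [← mul_one u⁻¹, ← Int.units_mul_self u, inv_mul_cancel_left]
      rw [hfact, map_mul, map_inv, hinv, Units.val_mul]
    rw [Γ.bic_eq_card_quot s hs i j σij hσapp, neg_one_pow_card_quot σij, hsign]
  -- the cyclic product collapses
  have hsum : ((-1 : ℤ) ^ (∑ i : Fin (n + 1), Γ.bic (ε i) (ε (i + 1))))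
      = (-1 : ℤ) ^ (b * (n + 1)) := by
    rw [← Finset.prod_pow_eq_pow_sum]
    have h1 : ∀ i : Fin (n + 1), ((-1 : ℤ) ^ Γ.bic (ε i) (ε (i + 1)))
        = (-1) ^ b * (sgn (ε i) * sgn (ε (i + 1))) := fun i => hpair _ _
    rw [Finset.prod_congr rfl (fun i _ => h1 i)]
    rw [Finset.prod_mul_distrib, Finset.prod_mul_distrib, Finset.prod_const]
    have h2 : (∏ i : Fin (n + 1), sgn (ε (i + 1))) = ∏ i : Fin (n + 1), sgn (ε i) :=
      Fintype.prod_equiv (Equiv.addRight (1 : Fin (n + 1)))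
        (fun i => sgn (ε (i + 1))) (fun i => sgn (ε i)) (fun i => rfl)
    rw [h2, ← Finset.prod_mul_distrib]
    rw [Finset.prod_congr rfl (fun i _ => hsgnsq (ε i)), Finset.prod_const_one]
    rw [mul_one, Finset.card_univ, Fintype.card_fin, ← pow_mul]
  -- evenness
  have hone : ((-1 : ℤ) ^ ((∑ i : Fin (n + 1), Γ.bic (ε i) (ε (i + 1))) + b * (n + 1))) = 1 := by
    rw [pow_add, hsum, ← pow_add, ← two_mul, pow_mul]
    norm_num
  have heven2 : Even ((∑ i : Fin (n + 1), Γ.bic (ε i) (ε (i + 1))) + b * (n + 1)) :=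
    (neg_one_pow_eq_one_iff_even (by norm_num : (-1 : ℤ) ≠ 1)).mp hone
  -- |V| = 2 b
  have hcardV : Nat.card Γ.V = 2 * b := by
    have e1 : {v : Γ.V // ¬ s v = true} ≃ W :=
      Equiv.subtypeEquivRight (fun v => by simp [Bool.not_eq_true])
    have e2 : W ≃ B := (τ 0).symm
    have := Fintype.card_congr (Equiv.sumCompl (fun v : Γ.V => s v = true))
    rw [Fintype.card_sum] at this
    rw [Nat.card_eq_fintype_card, ← this, Fintype.card_congr (e1.trans e2)]
    show b + b = 2 * b
    ring
  obtain ⟨t, ht⟩ := heven2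
  refine ⟨(t : ℤ) - n * b, ?_⟩
  rw [hcardV]
  have htq : ((∑ i : Fin (n + 1), Γ.bic (ε i) (ε (i + 1)) : ℕ) : ℚ) + b * (n + 1)
      = t + t := by exact_mod_cast congrArg (fun m : ℕ => (m : ℚ)) ht
  push_cast at htq ⊢
  ring_nf
  ring_nf at htq
  linarith [htq]
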